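/- arXiv:2109.01345 — 3 statements merged into one kernel-verified Lean document; each statement's English description precedes it below -/
import Mathlib

section
/- Let ρ be a d×d density matrix and let Φ₁,…,Φ_N (N ≥ 2) be quantum channels on d×d matrices, where Φ_s has Kraus operators K₁ˢ,…,K_nˢ. Then for any permutations π₁,…,π_N of {1,…,n}, ∑_{s=1}^{N} I_ρ(Φ_s) ≥ (1/(2N−2)) { ∑_{1≤s<t≤N} ∑_{i=1}^{n} I_ρ(K^s_{π_s(i)} + K^t_{π_t(i)}) + (2/(N(N−1))) [ ∑_{1≤s<t≤N} √( ∑_{i=1}^{n} I_ρ(K^s_{π_s(i)} − K^t_{π_t(i)}) ) ]² }. -/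
open Matrix Finset
open scoped ComplexOrder

/-- The positive semidefinite square root, as `Matrix.PosSemidef.sqrt` was defined in older
Mathlib (removed since). -/
noncomputable def Matrix.PosSemidef.sqrt {n 𝕜 : Type*} [Fintype n] [DecidableEq n] [RCLike 𝕜]
    {A : Matrix n n 𝕜} (hA : A.PosSemidef) : Matrix n n 𝕜 :=
  hA.1.eigenvectorUnitary.1 * diagonal ((↑) ∘ (√·) ∘ hA.1.eigenvalues) *
    (star hA.1.eigenvectorUnitary : Matrix n n 𝕜)

/-- Wigner–Yanase skew information `I_ρ(A) = (1/2) Tr([√ρ, A]† [√ρ, A])` of a matrix `A`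
with respect to a positive semidefinite matrix `ρ`, where `√ρ = hρ.sqrt` is the positive
semidefinite square root of `ρ`. -/
noncomputable def skewInfo {d : ℕ} {ρ : Matrix (Fin d) (Fin d) ℂ} (hρ : ρ.PosSemidef)
    (A : Matrix (Fin d) (Fin d) ℂ) : ℝ :=
  (1 / 2 : ℝ) *
    (((hρ.sqrt * A - A * hρ.sqrt)ᴴ * (hρ.sqrt * A - A * hρ.sqrt)).trace).re

lemma skewInfo_nonneg {d : ℕ} {ρ : Matrix (Fin d) (Fin d) ℂ} (hρ : ρ.PosSemidef)
    (A : Matrix (Fin d) (Fin d) ℂ) : 0 ≤ skewInfo hρ A := by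
  unfold skewInfo
  set B := hρ.sqrt * A - A * hρ.sqrt with hB
  have : 0 ≤ ((Bᴴ * B).trace).re := by
    rw [Matrix.trace]
    simp only [Matrix.diag, Matrix.mul_apply, Matrix.conjTranspose_apply, Complex.re_sum]
    apply Finset.sum_nonneg
    intro j _
    apply Finset.sum_nonneg
    intro i _
    simp only [Complex.mul_re, Complex.star_def, Complex.conj_re, Complex.conj_im]
    nlinarith [sq_nonneg (B i j).re, sq_nonneg (B i j).im]
  linarith

lemma skewInfo_parallelogram {d : ℕ} {ρ : Matrix (Fin d) (Fin d) ℂ} (hρ : ρ.PosSemidef)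
    (A B : Matrix (Fin d) (Fin d) ℂ) :
    skewInfo hρ (A + B) + skewInfo hρ (A - B) = 2 * skewInfo hρ A + 2 * skewInfo hρ B := by
  unfold skewInfo
  set S := hρ.sqrt with hS
  have h1 : S * (A + B) - (A + B) * S = (S * A - A * S) + (S * B - B * S) := by noncomm_ring
  have h2 : S * (A - B) - (A - B) * S = (S * A - A * S) - (S * B - B * S) := by noncomm_ring
  rw [h1, h2]
  set C := S * A - A * S with hC
  set D := S * B - B * S with hD
  have key : ((C + D)ᴴ * (C + D)).trace + ((C - D)ᴴ * (C - D)).trace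
      = 2 * (Cᴴ * C).trace + 2 * (Dᴴ * D).trace := by
    simp only [Matrix.conjTranspose_add, Matrix.conjTranspose_sub, Matrix.add_mul,
      Matrix.mul_add, Matrix.sub_mul, Matrix.mul_sub, Matrix.trace_add, Matrix.trace_sub]
    ring
  have := congrArg Complex.re key
  simp only [Complex.add_re, Complex.mul_re] at this
  norm_num [Matrix.conjTranspose_add, Matrix.conjTranspose_sub] at this ⊢
  linarith

lemma pair_sum_aux {N : ℕ} (f : Fin N → ℝ) :
    ∑ s : Fin N, ∑ t ∈ Finset.Ioi s, (f s + f t) = ((N : ℝ) - 1) * ∑ s, f s := by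
  have hswap : ∑ s : Fin N, ∑ t ∈ Finset.Ioi s, f t
      = ∑ t : Fin N, ∑ s ∈ Finset.Iio t, f t := by
    refine Finset.sum_comm' ?_
    intro x y
    simp [Finset.mem_Ioi, Finset.mem_Iio]
  have h1 : ∀ s : Fin N, ∑ t ∈ Finset.Ioi s, f s = ((N - 1 - (s : ℕ) : ℕ) : ℝ) * f s := by
    intro s
    rw [Finset.sum_const, Fin.card_Ioi, nsmul_eq_mul]
  have h2 : ∀ t : Fin N, ∑ s ∈ Finset.Iio t, f t = ((t : ℕ) : ℝ) * f t := by
    intro t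
    rw [Finset.sum_const, Fin.card_Iio, nsmul_eq_mul]
  calc ∑ s : Fin N, ∑ t ∈ Finset.Ioi s, (f s + f t)
      = ∑ s : Fin N, ∑ t ∈ Finset.Ioi s, f s + ∑ s : Fin N, ∑ t ∈ Finset.Ioi s, f t := by
        rw [← Finset.sum_add_distrib]
        exact Finset.sum_congr rfl fun s _ => Finset.sum_add_distrib
    _ = ∑ s : Fin N, (((N - 1 - (s : ℕ) : ℕ) : ℝ) * f s + ((s : ℕ) : ℝ) * f s) := by
        rw [hswap, ← Finset.sum_add_distrib]
        exact Finset.sum_congr rfl fun s _ => by rw [h1 s, h2 s]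
    _ = ∑ s : Fin N, ((N : ℝ) - 1) * f s := by
        refine Finset.sum_congr rfl fun s _ => ?_
        have hs : (s : ℕ) ≤ N - 1 := Nat.le_sub_one_of_lt s.isLt
        have h1N : 1 ≤ N := by have := s.isLt; omega
        rw [Nat.cast_sub hs, Nat.cast_sub h1N, Nat.cast_one]
        ring
    _ = ((N : ℝ) - 1) * ∑ s, f s := by rw [Finset.mul_sum]

lemma pairs_card {N : ℕ} :
    (∑ s : Fin N, #(Finset.Ioi s)) * 2 = N * (N - 1) := by
  have : ∑ s : Fin N, #(Finset.Ioi s) = ∑ i ∈ Finset.range N, (N - 1 - i) := by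
    rw [← Fin.sum_univ_eq_sum_range (fun i => N - 1 - i) N]
    exact Finset.sum_congr rfl fun s _ => Fin.card_Ioi s
  rw [this, Finset.sum_range_reflect (fun i => i) N, Finset.sum_range_id_mul_two]

theorem stmt_3 {d n N : ℕ} (hN : 2 ≤ N)
    (ρ : Matrix (Fin d) (Fin d) ℂ) (hρ : ρ.PosSemidef) (htr : ρ.trace = 1)
    (K : Fin N → Fin n → Matrix (Fin d) (Fin d) ℂ)
    (hK : ∀ s, ∑ i, (K s i)ᴴ * K s i = 1)
    (π : Fin N → Equiv.Perm (Fin n)) :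
    ∑ s, ∑ i, skewInfo hρ (K s i) ≥
      (1 / (2 * (N : ℝ) - 2)) *
        ((∑ s : Fin N, ∑ t ∈ Finset.Ioi s, ∑ i, skewInfo hρ (K s (π s i) + K t (π t i)))
          + (2 / ((N : ℝ) * ((N : ℝ) - 1))) *
            (∑ s : Fin N, ∑ t ∈ Finset.Ioi s,
              Real.sqrt (∑ i, skewInfo hρ (K s (π s i) - K t (π t i)))) ^ 2) := by
  set a : Fin N → ℝ := fun s => ∑ i, skewInfo hρ (K s i) with ha
  set A : ℝ := ∑ s, a s with hA
  set M : Fin N → Fin N → ℝ := fun s t => ∑ i, skewInfo hρ (K s (π s i) - K t (π t i)) with hM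
  set P : ℝ := ∑ s : Fin N, ∑ t ∈ Finset.Ioi s, ∑ i, skewInfo hρ (K s (π s i) + K t (π t i))
    with hP
  set S : ℝ := ∑ s : Fin N, ∑ t ∈ Finset.Ioi s, Real.sqrt (M s t) with hS
  have hMnn : ∀ s t, 0 ≤ M s t := fun s t =>
    Finset.sum_nonneg fun i _ => skewInfo_nonneg hρ _
  have haperm : ∀ s : Fin N, ∑ i, skewInfo hρ (K s (π s i)) = a s := fun s =>
    Equiv.sum_comp (π s) (fun i => skewInfo hρ (K s i))
  -- parallelogram summed
  have hPM : P + ∑ s : Fin N, ∑ t ∈ Finset.Ioi s, M s t = 2 * (((N : ℝ) - 1) * A) := by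
    have : P + ∑ s : Fin N, ∑ t ∈ Finset.Ioi s, M s t
        = ∑ s : Fin N, ∑ t ∈ Finset.Ioi s, (2 * a s + 2 * a t) := by
      rw [hP, ← Finset.sum_add_distrib]
      refine Finset.sum_congr rfl fun s _ => ?_
      rw [← Finset.sum_add_distrib]
      refine Finset.sum_congr rfl fun t _ => ?_
      rw [hM]
      rw [← Finset.sum_add_distrib]
      have : ∑ i, (skewInfo hρ (K s (π s i) + K t (π t i))
          + skewInfo hρ (K s (π s i) - K t (π t i)))
          = ∑ i, (2 * skewInfo hρ (K s (π s i)) + 2 * skewInfo hρ (K t (π t i))) :=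
        Finset.sum_congr rfl fun i _ => skewInfo_parallelogram hρ _ _
      rw [this, Finset.sum_add_distrib, ← Finset.mul_sum, ← Finset.mul_sum,
        haperm s, haperm t]
    rw [this, pair_sum_aux (fun s => 2 * a s)]
    have h2A : ∑ s : Fin N, 2 * a s = 2 * A := (Finset.mul_sum _ _ _).symm
    rw [h2A]
    ring
  -- Cauchy–Schwarz
  have hNR : (2 : ℝ) ≤ (N : ℝ) := by exact_mod_cast hN
  have hcard : ((∑ s : Fin N, #(Finset.Ioi s) : ℕ) : ℝ) * 2 = (N : ℝ) * ((N : ℝ) - 1) := by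
    have := pairs_card (N := N)
    have h1 : ((N * (N - 1) : ℕ) : ℝ) = (N : ℝ) * ((N : ℝ) - 1) := by
      rw [Nat.cast_mul, Nat.cast_sub (by omega : 1 ≤ N), Nat.cast_one]
    calc ((∑ s : Fin N, #(Finset.Ioi s) : ℕ) : ℝ) * 2
        = (((∑ s : Fin N, #(Finset.Ioi s)) * 2 : ℕ) : ℝ) := by push_cast; ring
      _ = ((N * (N - 1) : ℕ) : ℝ) := by rw [this]
      _ = (N : ℝ) * ((N : ℝ) - 1) := h1
  have hCS : S ^ 2 ≤ ((∑ s : Fin N, #(Finset.Ioi s) : ℕ) : ℝ)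
      * ∑ s : Fin N, ∑ t ∈ Finset.Ioi s, M s t := by
    have h1 : S = ∑ p ∈ (Finset.univ.sigma fun s : Fin N => Finset.Ioi s),
        Real.sqrt (M p.1 p.2) := by
      rw [hS, Finset.sum_sigma']
    have h2 : ∑ s : Fin N, ∑ t ∈ Finset.Ioi s, M s t
        = ∑ p ∈ (Finset.univ.sigma fun s : Fin N => Finset.Ioi s), M p.1 p.2 := by
      rw [Finset.sum_sigma']
    rw [h1, h2]
    have := sq_sum_le_card_mul_sum_sq
      (s := Finset.univ.sigma fun s : Fin N => Finset.Ioi s)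
      (f := fun p => Real.sqrt (M p.1 p.2))
    rw [Finset.card_sigma] at this
    refine this.trans (le_of_eq ?_)
    congr 1
    exact Finset.sum_congr rfl fun p _ => Real.sq_sqrt (hMnn p.1 p.2)
  set Msum : ℝ := ∑ s : Fin N, ∑ t ∈ Finset.Ioi s, M s t with hMsum
  have hMsumnn : 0 ≤ Msum :=
    Finset.sum_nonneg fun s _ => Finset.sum_nonneg fun t _ => hMnn s t
  have hNN1pos : 0 < (N : ℝ) * ((N : ℝ) - 1) := by nlinarith
  have hq : 2 / ((N : ℝ) * ((N : ℝ) - 1)) * S ^ 2 ≤ Msum := by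
    rw [div_mul_eq_mul_div, div_le_iff₀ hNN1pos]
    calc 2 * S ^ 2 ≤ 2 * (((∑ s : Fin N, #(Finset.Ioi s) : ℕ) : ℝ) * Msum) := by
          nlinarith [hCS]
      _ = Msum * ((N : ℝ) * ((N : ℝ) - 1)) := by rw [← hcard]; ring
  have hden : 0 < 2 * (N : ℝ) - 2 := by linarith
  calc (1 / (2 * (N : ℝ) - 2)) * (P + 2 / ((N : ℝ) * ((N : ℝ) - 1)) * S ^ 2)
      ≤ (1 / (2 * (N : ℝ) - 2)) * (P + Msum) := by
        apply mul_le_mul_of_nonneg_left _ (by positivity)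
        linarith
    _ = (1 / (2 * (N : ℝ) - 2)) * (2 * (((N : ℝ) - 1) * A)) := by rw [hPM]
    _ = A := by rw [div_mul_eq_mul_div, one_mul, div_eq_iff hden.ne']; ring
end

section
/- Let ρ be a d×d density matrix and let U₁,…,U_N (N ≥ 2) be d×d unitary matrices. Then ∑_{s=1}^{N} I_ρ(U_s) ≥ (1/N) { I_ρ( ∑_{s=1}^{N} U_s ) + (2/(N(N−1))) [ ∑_{1≤s<t≤N} √( I_ρ(U_s − U_t) ) ]² }. -/
open Matrix Finset
open scoped ComplexOrder

private lemma sum_pairs_aux {N : ℕ} (g : Fin N → Fin N → ℝ) :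
    ∑ s, ∑ t ∈ Finset.Ioi s, (g s t + g t s)
      = (∑ s, ∑ t, g s t) - ∑ s, g s s := by
  have key : ∀ (f : Fin N → ℝ) (s : Fin N),
      ∑ t ∈ Finset.Ioi s, f t = ∑ t, if s < t then f t else 0 := by
    intro f s
    rw [← Finset.sum_filter]
    congr 1
    ext t
    simp
  have h1 : ∑ s, ∑ t ∈ Finset.Ioi s, (g s t + g t s)
      = (∑ s : Fin N, ∑ t : Fin N, if s < t then g s t else 0)
        + ∑ s : Fin N, ∑ t : Fin N, if s < t then g t s else 0 := by
    simp_rw [key, ← Finset.sum_add_distrib]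
    congr 1; funext s; congr 1; funext t
    by_cases h : s < t <;> simp [h]
  have h2 : (∑ s : Fin N, ∑ t : Fin N, if s < t then g t s else 0)
      = ∑ s : Fin N, ∑ t : Fin N, if t < s then g s t else 0 := by
    rw [Finset.sum_comm]
  rw [h1, h2, ← Finset.sum_add_distrib]
  have h3 : ∀ s : Fin N, ((∑ t : Fin N, if s < t then g s t else 0)
      + ∑ t : Fin N, if t < s then g s t else 0)
      = (∑ t, g s t) - g s s := by
    intro s
    rw [← Finset.sum_add_distrib]
    have : ∀ t : Fin N, ((if s < t then g s t else 0) + if t < s then g s t else 0)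
        = g s t - (if s = t then g s t else 0) := by
      intro t
      rcases lt_trichotomy s t with h | h | h
      · simp [h, not_lt_of_gt h, h.ne]
      · simp [h]
      · simp [h, not_lt_of_gt h, h.ne']
    simp_rw [this, Finset.sum_sub_distrib, Finset.sum_ite_eq]
    simp
  simp_rw [h3, Finset.sum_sub_distrib]

set_option maxHeartbeats 1000000 in
theorem stmt_6 {d N : ℕ} (hN : 2 ≤ N)
    (ρ : Matrix (Fin d) (Fin d) ℂ) (hρ : ρ.PosSemidef) (htr : ρ.trace = 1)
    (U : Fin N → Matrix (Fin d) (Fin d) ℂ)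
    (hU : ∀ s, U s ∈ Matrix.unitaryGroup (Fin d) ℂ) :
    ∑ s, skewInfo hρ (U s) ≥
      (1 / (N : ℝ)) *
        (skewInfo hρ (∑ s, U s)
          + (2 / ((N : ℝ) * ((N : ℝ) - 1))) *
            (∑ s : Fin N, ∑ t ∈ Finset.Ioi s,
              Real.sqrt (skewInfo hρ (U s - U t))) ^ 2) := by
  classical
  set R := hρ.sqrt with hRdef
  -- the commutator as a linear map into Euclidean space
  let F : Matrix (Fin d) (Fin d) ℂ →ₗ[ℂ] (Fin d × Fin d → ℂ) :=
    { toFun := fun X p => (R * X - X * R) p.1 p.2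
      map_add' := by
        intro X Y
        funext p
        simp [Matrix.mul_add, Matrix.add_mul, Matrix.sub_apply, Matrix.add_apply]
        ring
      map_smul' := by
        intro c X
        funext p
        simp [Matrix.mul_smul, Matrix.smul_mul, Matrix.sub_apply, Matrix.smul_apply]
        ring }
  let L : Matrix (Fin d) (Fin d) ℂ →ₗ[ℂ] EuclideanSpace ℂ (Fin d × Fin d) :=
    (WithLp.linearEquiv 2 ℂ (Fin d × Fin d → ℂ)).symm.toLinearMap.comp F
  have hLapp : ∀ (X : Matrix (Fin d) (Fin d) ℂ) (p : Fin d × Fin d),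
      L X p = (R * X - X * R) p.1 p.2 := fun X p => rfl
  -- skewInfo as half squared norm
  have hskew : ∀ A, skewInfo hρ A = (1 / 2 : ℝ) * ‖L A‖ ^ 2 := by
    intro A
    have h2 : ‖L A‖ ^ 2 = ∑ p : Fin d × Fin d, ‖(R * A - A * R) p.1 p.2‖ ^ 2 := by
      rw [EuclideanSpace.norm_eq, Real.sq_sqrt (by positivity)]
      simp_rw [hLapp]
    rw [skewInfo, h2]
    congr 1
    set X := R * A - A * R with hX
    have : (Xᴴ * X).trace = ∑ i, ∑ j, star (X j i) * X j i := by
      simp [Matrix.trace, Matrix.diag, Matrix.mul_apply, Matrix.conjTranspose_apply]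
    rw [this, Complex.re_sum]
    have : ∀ i : Fin d, (∑ j, star (X j i) * X j i).re = ∑ j, ‖X j i‖ ^ 2 := by
      intro i
      rw [Complex.re_sum]
      congr 1; funext j
      rw [Complex.star_def, mul_comm, Complex.mul_conj]
      simp [Complex.normSq_eq_norm_sq, ← Complex.ofReal_pow,
        Complex.ofReal_re]
    simp_rw [this]
    rw [Fintype.sum_prod_type, Finset.sum_comm]
  -- the vectors
  set v : Fin N → EuclideanSpace ℂ (Fin d × Fin d) := fun s => L (U s) with hv
  have hsumv : L (∑ s, U s) = ∑ s, v s := map_sum L U univ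
  have hsubv : ∀ s t, L (U s - U t) = v s - v t := fun s t => map_sub L _ _
  set B : ℝ := ∑ s, ‖v s‖ ^ 2 with hB
  set P : ℝ := ‖∑ s, v s‖ ^ 2 with hP
  set D : ℝ := ∑ s, ∑ t ∈ Finset.Ioi s, ‖v s - v t‖ ^ 2 with hD
  set S : ℝ := ∑ s, ∑ t ∈ Finset.Ioi s, ‖v s - v t‖ with hS
  have hn2 : (2 : ℝ) ≤ (N : ℝ) := by exact_mod_cast hN
  have hnpos : (0 : ℝ) < (N : ℝ) * ((N : ℝ) - 1) := by nlinarith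
  -- inner product expansion of P
  have hPexp : P = ∑ s, ∑ t, (inner ℝ (v s) (v t) : ℝ) := by
    rw [hP, ← real_inner_self_eq_norm_sq, sum_inner]
    refine Finset.sum_congr rfl fun s _ => ?_
    rw [inner_sum]
  have hdiag : (∑ s, (inner ℝ (v s) (v s) : ℝ)) = B := by
    simp_rw [real_inner_self_eq_norm_sq, hB]
  -- parallelogram-type identity: D = N * B - P
  have hIdent : D = (N : ℝ) * B - P := by
    have e1 := sum_pairs_aux (fun s t => (inner ℝ (v s) (v t) : ℝ))
    have e2 := sum_pairs_aux (fun s t => ‖v s‖ ^ 2)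
    have e2' : (∑ s, ∑ t ∈ Finset.Ioi s, (‖v s‖ ^ 2 + ‖v t‖ ^ 2))
        = (N : ℝ) * B - B := by
      rw [e2]
      have hc : (∑ s : Fin N, ∑ _t : Fin N, ‖v s‖ ^ 2)
          = (N : ℝ) * ∑ s : Fin N, ‖v s‖ ^ 2 := by
        rw [Finset.mul_sum]
        refine Finset.sum_congr rfl fun s _ => ?_
        simp [Finset.sum_const, Finset.card_univ, mul_comm]
      rw [hc, ← hB]
    have e3 : ∀ s t : Fin N, ‖v s - v t‖ ^ 2
        = (‖v s‖ ^ 2 + ‖v t‖ ^ 2)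
          - ((inner ℝ (v s) (v t) : ℝ) + (inner ℝ (v t) (v s) : ℝ)) := by
      intro s t
      rw [norm_sub_sq_real, real_inner_comm (v t) (v s)]
      ring
    have : D = ((N : ℝ) * B - B) - (P - B) := by
      rw [hD]
      simp_rw [e3]
      simp only [Finset.sum_sub_distrib]
      rw [e2', e1, hdiag, ← hPexp]
    linarith [this]
  -- Cauchy-Schwarz: S^2 ≤ (N(N-1)/2) * D
  have hcard : (2 : ℝ) * (∑ s : Fin N, ∑ t ∈ Finset.Ioi s, (1 : ℝ))
      = (N : ℝ) ^ 2 - (N : ℝ) := by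
    have h := sum_pairs_aux (fun _ _ : Fin N => (1 : ℝ))
    have hl : ∑ s : Fin N, ∑ t ∈ Finset.Ioi s, ((1 : ℝ) + 1)
        = 2 * ∑ s : Fin N, ∑ t ∈ Finset.Ioi s, (1 : ℝ) := by
      rw [Finset.mul_sum]
      refine Finset.sum_congr rfl fun s _ => ?_
      rw [Finset.mul_sum]
      norm_num
    rw [hl] at h
    rw [h]
    simp [Finset.sum_const, Finset.card_univ]
    ring
  have hCS : S ^ 2 ≤ ((N : ℝ) * ((N : ℝ) - 1) / 2) * D := by
    have h := sq_sum_le_card_mul_sum_sq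
      (s := (univ : Finset (Fin N)).sigma fun s => Finset.Ioi s)
      (f := fun p : Σ _ : Fin N, Fin N => ‖v p.1 - v p.2‖)
    simp only [Finset.sum_sigma] at h
    have hc : ((((univ : Finset (Fin N)).sigma fun s => Finset.Ioi s).card : ℝ))
        = (N : ℝ) * ((N : ℝ) - 1) / 2 := by
      rw [Finset.card_eq_sum_ones]
      push_cast
      rw [show ((((univ : Finset (Fin N)).sigma fun s => Finset.Ioi s).sum
          fun _ => (1 : ℝ))) = ∑ s : Fin N, ∑ t ∈ Finset.Ioi s, (1 : ℝ) from
        Finset.sum_sigma _ _ _]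
      linarith [hcard]
    calc S ^ 2 ≤ ((((univ : Finset (Fin N)).sigma fun s => Finset.Ioi s).card : ℝ))
          * ∑ s, ∑ t ∈ Finset.Ioi s, ‖v s - v t‖ ^ 2 := by
            rw [hS]
            exact h
      _ = ((N : ℝ) * ((N : ℝ) - 1) / 2) * D := by rw [hc, hD]
  have hD0 : 0 ≤ D := by
    rw [hD]
    exact Finset.sum_nonneg fun s _ => Finset.sum_nonneg fun t _ => sq_nonneg _
  -- rewrite the goal
  have hgoal1 : ∑ s, skewInfo hρ (U s) = (1 / 2 : ℝ) * B := by
    simp_rw [hskew, hB]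
    rw [Finset.mul_sum]
  have hgoal2 : skewInfo hρ (∑ s, U s) = (1 / 2 : ℝ) * P := by
    rw [hskew, hsumv, hP]
  have hgoal3 : (∑ s : Fin N, ∑ t ∈ Finset.Ioi s,
      Real.sqrt (skewInfo hρ (U s - U t))) = Real.sqrt (1 / 2) * S := by
    rw [hS, Finset.mul_sum]
    refine Finset.sum_congr rfl fun s _ => ?_
    rw [Finset.mul_sum]
    refine Finset.sum_congr rfl fun t _ => ?_
    rw [hskew, hsubv, Real.sqrt_mul (by norm_num), Real.sqrt_sq (norm_nonneg _)]
  rw [hgoal1, hgoal2, hgoal3, ge_iff_le, mul_pow, Real.sq_sqrt (by norm_num : (0:ℝ) ≤ 1/2)]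
  -- final arithmetic
  have h1 : (2 / ((N : ℝ) * ((N : ℝ) - 1))) * (1 / 2 * S ^ 2) ≤ (1 / 2) * D := by
    rw [div_mul_eq_mul_div, div_le_iff₀ hnpos]
    nlinarith [hCS]
  have h2 : (1 / 2 : ℝ) * P + (2 / ((N : ℝ) * ((N : ℝ) - 1))) * (1 / 2 * S ^ 2)
      ≤ (N : ℝ) * B / 2 := by
    linarith [h1, hIdent]
  calc (1 / (N : ℝ)) * ((1 / 2 : ℝ) * P
        + (2 / ((N : ℝ) * ((N : ℝ) - 1))) * (1 / 2 * S ^ 2))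
      ≤ (1 / (N : ℝ)) * ((N : ℝ) * B / 2) := by
        apply mul_le_mul_of_nonneg_left h2
        positivity
    _ = (1 / 2 : ℝ) * B := by
        field_simp
end

section
/- Let ρ be a d×d density matrix and let U₁,…,U_N (N ≥ 3) be d×d unitary matrices. Then ∑_{s=1}^{N} √(I_ρ(U_s)) ≥ (1/(N−2)) { ∑_{1≤s<t≤N} √( I_ρ(U_s + U_t) ) − √( I_ρ( ∑_{s=1}^{N} U_s ) ) }. -/
open Matrix Finset
open scoped ComplexOrder

/- ### Auxiliary combinatorial lemmas -/

lemma aux_swap_Iio {n : ℕ} (h : Fin n → Fin n → ℝ) :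
    ∑ i, ∑ j ∈ Finset.Iio i, h i j = ∑ i, ∑ j ∈ Finset.Ioi i, h j i := by
  rw [Finset.sum_comm' (s := Finset.univ) (t := fun i => Finset.Iio i)
    (t' := Finset.univ) (s' := fun j => Finset.Ioi j)]
  intro i j
  simp [Finset.mem_Iio, Finset.mem_Ioi]

lemma aux_count_pairs {n : ℕ} (f : Fin n → ℝ) :
    ∑ i, ∑ j ∈ Finset.Ioi i, (f i + f j) = ((n : ℝ) - 1) * ∑ i, f i := by
  have h1 : ∑ i, ∑ j ∈ Finset.Ioi i, (f i + f j)
      = ∑ i, ∑ j ∈ Finset.Ioi i, f i + ∑ i, ∑ j ∈ Finset.Iio i, f i := by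
    rw [aux_swap_Iio (fun i j => f i)]
    simp [Finset.sum_add_distrib]
  rw [h1]
  have h2 : ∀ i : Fin n, ∑ j ∈ Finset.Ioi i, f i + ∑ j ∈ Finset.Iio i, f i
      = ((n : ℝ) - 1) * f i := by
    intro i
    rw [Finset.sum_const, Finset.sum_const, Fin.card_Ioi, Fin.card_Iio,
      nsmul_eq_mul, nsmul_eq_mul]
    have hi : (i : ℕ) < n := i.isLt
    have hcast : ((n - 1 - (i : ℕ) : ℕ) : ℝ) = (n : ℝ) - 1 - ((i : ℕ) : ℝ) := by
      rw [Nat.cast_sub (by omega), Nat.cast_sub (by omega)]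
      push_cast; ring
    rw [hcast]; ring
  rw [← Finset.sum_add_distrib, Finset.sum_congr rfl (fun i _ => h2 i), ← Finset.mul_sum]

lemma aux_sym_double_sum {n : ℕ} (g : Fin n → Fin n → ℝ) (hg : ∀ i j, g i j = g j i) :
    ∑ i, ∑ j, g i j = ∑ i, g i i + 2 * ∑ i, ∑ j ∈ Finset.Ioi i, g i j := by
  have hsplit : ∀ i : Fin n, ∑ j, g i j
      = ∑ j ∈ Finset.Iio i, g i j + g i i + ∑ j ∈ Finset.Ioi i, g i j := by
    intro i
    have : (Finset.univ : Finset (Fin n)) = insert i (Finset.Iio i ∪ Finset.Ioi i) := by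
      ext j
      simp only [Finset.mem_univ, Finset.mem_insert, Finset.mem_union, Finset.mem_Iio,
        Finset.mem_Ioi, true_iff]
      rcases lt_trichotomy j i with h | h | h
      · exact Or.inr (Or.inl h)
      · exact Or.inl h
      · exact Or.inr (Or.inr h)
    rw [this, Finset.sum_insert (by simp), Finset.sum_union (by
      simp [Finset.disjoint_left] ; intro j hj; omega)]
    ring
  calc ∑ i, ∑ j, g i j
      = ∑ i, (∑ j ∈ Finset.Iio i, g i j + g i i + ∑ j ∈ Finset.Ioi i, g i j) :=
        Finset.sum_congr rfl (fun i _ => hsplit i)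
    _ = ∑ i, ∑ j ∈ Finset.Iio i, g i j + ∑ i, g i i + ∑ i, ∑ j ∈ Finset.Ioi i, g i j := by
        rw [Finset.sum_add_distrib, Finset.sum_add_distrib]
    _ = ∑ i, g i i + 2 * ∑ i, ∑ j ∈ Finset.Ioi i, g i j := by
        rw [aux_swap_Iio g]
        have : ∑ i, ∑ j ∈ Finset.Ioi i, g j i = ∑ i, ∑ j ∈ Finset.Ioi i, g i j :=
          Finset.sum_congr rfl (fun i _ => Finset.sum_congr rfl (fun j _ => hg j i))
        rw [this]; ring

/- ### Generalized Hlawka (Djoković) inequality in a real inner product space -/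

lemma aux_hlawka {E : Type*} [SeminormedAddCommGroup E] [InnerProductSpace ℝ E]
    {n : ℕ} (x : Fin n → E) :
    ∑ i, ∑ j ∈ Finset.Ioi i, ‖x i + x j‖ ≤
      ((n : ℝ) - 2) * ∑ i, ‖x i‖ + ‖∑ i, x i‖ := by
  set a : Fin n → ℝ := fun i => ‖x i‖ with ha
  set Sa : ℝ := ∑ i, a i with hSa
  set s : ℝ := ‖∑ i, x i‖ with hs
  set P : ℝ := ∑ i, ∑ j ∈ Finset.Ioi i, ‖x i + x j‖ with hP
  have hSann : 0 ≤ Sa := Finset.sum_nonneg fun i _ => norm_nonneg _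
  have hsnn : 0 ≤ s := norm_nonneg _
  -- quadratic identity: ∑_{i<j} ‖x i + x j‖² = (n-2) ∑ a² + s²
  have hinner : s ^ 2 = ∑ i, a i ^ 2 + 2 * ∑ i, ∑ j ∈ Finset.Ioi i, (inner ℝ (x i) (x j) : ℝ) := by
    have h1 : s ^ 2 = (inner ℝ (∑ i, x i) (∑ i, x i) : ℝ) := (real_inner_self_eq_norm_sq _).symm
    have h2 : (inner ℝ (∑ i, x i) (∑ i, x i) : ℝ) = ∑ i, ∑ j, (inner ℝ (x i) (x j) : ℝ) := by
      rw [sum_inner]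
      exact Finset.sum_congr rfl fun i _ => inner_sum _ _ _
    have h3 := aux_sym_double_sum (fun i j => (inner ℝ (x i) (x j) : ℝ))
      (fun i j => real_inner_comm _ _)
    simp only [real_inner_self_eq_norm_sq] at h3
    rw [h1, h2, h3]
  have hQ : ∑ i, ∑ j ∈ Finset.Ioi i, ‖x i + x j‖ ^ 2
      = ((n : ℝ) - 2) * ∑ i, a i ^ 2 + s ^ 2 := by
    have h1 : ∀ i, ∀ j ∈ Finset.Ioi i,
        ‖x i + x j‖ ^ 2 = (a i ^ 2 + a j ^ 2) + 2 * (inner ℝ (x i) (x j) : ℝ) := by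
      intro i j _
      rw [norm_add_sq_real]; ring
    calc ∑ i, ∑ j ∈ Finset.Ioi i, ‖x i + x j‖ ^ 2
        = ∑ i, ∑ j ∈ Finset.Ioi i, ((a i ^ 2 + a j ^ 2) + 2 * (inner ℝ (x i) (x j) : ℝ)) :=
          Finset.sum_congr rfl fun i _ => Finset.sum_congr rfl fun j hj => h1 i j hj
      _ = ∑ i, ∑ j ∈ Finset.Ioi i, (a i ^ 2 + a j ^ 2)
          + 2 * ∑ i, ∑ j ∈ Finset.Ioi i, (inner ℝ (x i) (x j) : ℝ) := by
          simp [Finset.sum_add_distrib, Finset.mul_sum]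
      _ = ((n : ℝ) - 1) * ∑ i, a i ^ 2
          + (s ^ 2 - ∑ i, a i ^ 2) := by
          rw [aux_count_pairs (fun i => a i ^ 2)]; rw [hinner]; ring
      _ = ((n : ℝ) - 2) * ∑ i, a i ^ 2 + s ^ 2 := by ring
  -- ∑_{i<j} (a i + a j)² = (n-2) ∑ a² + Sa²
  have hL2 : ∑ i, ∑ j ∈ Finset.Ioi i, (a i + a j) ^ 2
      = ((n : ℝ) - 2) * ∑ i, a i ^ 2 + Sa ^ 2 := by
    have hmul : Sa ^ 2 = ∑ i, a i ^ 2 + 2 * ∑ i, ∑ j ∈ Finset.Ioi i, (a i * a j) := by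
      have h3 := aux_sym_double_sum (fun i j => a i * a j) (fun i j => mul_comm _ _)
      have h4 : Sa ^ 2 = ∑ i, ∑ j, a i * a j := by
        rw [sq, hSa, Finset.sum_mul_sum]
      rw [h4, h3]
      simp [sq]
    calc ∑ i, ∑ j ∈ Finset.Ioi i, (a i + a j) ^ 2
        = ∑ i, ∑ j ∈ Finset.Ioi i, ((a i ^ 2 + a j ^ 2) + 2 * (a i * a j)) := by
          apply Finset.sum_congr rfl; intro i _; apply Finset.sum_congr rfl; intro j _; ring
      _ = ∑ i, ∑ j ∈ Finset.Ioi i, (a i ^ 2 + a j ^ 2)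
          + 2 * ∑ i, ∑ j ∈ Finset.Ioi i, (a i * a j) := by
          simp [Finset.sum_add_distrib, Finset.mul_sum]
      _ = ((n : ℝ) - 1) * ∑ i, a i ^ 2 + (Sa ^ 2 - ∑ i, a i ^ 2) := by
          rw [aux_count_pairs (fun i => a i ^ 2)]; rw [hmul]; ring
      _ = ((n : ℝ) - 2) * ∑ i, a i ^ 2 + Sa ^ 2 := by ring
  have hL : ∑ i, ∑ j ∈ Finset.Ioi i, (a i + a j) = ((n : ℝ) - 1) * Sa :=
    aux_count_pairs a
  -- triangle inequality for pairs
  have hA : ∀ i j, ‖x i + x j‖ ≤ a i + a j := fun i j => norm_add_le _ _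
  -- second factor nonneg
  have hB : ∀ i : Fin n, ∀ j ∈ Finset.Ioi i,
      ‖x i + x j‖ ≤ Sa + s - (a i + a j) := by
    intro i j hj
    have hij : i ≠ j := (Finset.mem_Ioi.mp hj).ne
    have hxy : x i + x j = (∑ k, x k) - ∑ k ∈ ({i, j} : Finset (Fin n))ᶜ, x k := by
      rw [eq_sub_iff_add_eq, ← Finset.sum_pair hij]
      exact Finset.sum_add_sum_compl _ _
    have h1 : ‖x i + x j‖ ≤ s + ∑ k ∈ ({i, j} : Finset (Fin n))ᶜ, a k := by
      rw [hxy]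
      refine le_trans (norm_sub_le _ _) ?_
      exact add_le_add le_rfl (norm_sum_le _ _)
    have h2 : ∑ k ∈ ({i, j} : Finset (Fin n))ᶜ, a k = Sa - (a i + a j) := by
      have := Finset.sum_add_sum_compl ({i, j} : Finset (Fin n)) a
      rw [Finset.sum_pair hij] at this
      linarith
    linarith
  -- the key identity
  set T : ℝ := Sa + s with hT
  have hkeyid : ∑ i, ∑ j ∈ Finset.Ioi i,
      ((a i + a j - ‖x i + x j‖) * (T - (a i + a j) - ‖x i + x j‖))
      = T * (((n : ℝ) - 1) * Sa) - (((n : ℝ) - 2) * ∑ i, a i ^ 2 + Sa ^ 2)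
        - T * P + (((n : ℝ) - 2) * ∑ i, a i ^ 2 + s ^ 2) := by
    have hexp : ∀ i : Fin n, ∀ j ∈ Finset.Ioi i,
        (a i + a j - ‖x i + x j‖) * (T - (a i + a j) - ‖x i + x j‖)
        = T * (a i + a j) - (a i + a j) ^ 2 - T * ‖x i + x j‖ + ‖x i + x j‖ ^ 2 := by
      intro i j _; ring
    calc ∑ i, ∑ j ∈ Finset.Ioi i,
        ((a i + a j - ‖x i + x j‖) * (T - (a i + a j) - ‖x i + x j‖))
        = ∑ i, ∑ j ∈ Finset.Ioi i,
          (T * (a i + a j) - (a i + a j) ^ 2 - T * ‖x i + x j‖ + ‖x i + x j‖ ^ 2) :=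
          Finset.sum_congr rfl fun i _ => Finset.sum_congr rfl fun j hj => hexp i j hj
      _ = T * (∑ i, ∑ j ∈ Finset.Ioi i, (a i + a j))
          - ∑ i, ∑ j ∈ Finset.Ioi i, (a i + a j) ^ 2
          - T * (∑ i, ∑ j ∈ Finset.Ioi i, ‖x i + x j‖)
          + ∑ i, ∑ j ∈ Finset.Ioi i, ‖x i + x j‖ ^ 2 := by
          rw [Finset.mul_sum, Finset.mul_sum, ← Finset.sum_sub_distrib,
            ← Finset.sum_sub_distrib, ← Finset.sum_add_distrib]
          apply Finset.sum_congr rfl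
          intro i _
          rw [Finset.mul_sum, Finset.mul_sum, ← Finset.sum_sub_distrib,
            ← Finset.sum_sub_distrib, ← Finset.sum_add_distrib]
      _ = T * (((n : ℝ) - 1) * Sa) - (((n : ℝ) - 2) * ∑ i, a i ^ 2 + Sa ^ 2)
          - T * P + (((n : ℝ) - 2) * ∑ i, a i ^ 2 + s ^ 2) := by
          rw [hL, hL2, hQ, ← hP]
  have hnn : 0 ≤ ∑ i, ∑ j ∈ Finset.Ioi i,
      ((a i + a j - ‖x i + x j‖) * (T - (a i + a j) - ‖x i + x j‖)) := by
    refine Finset.sum_nonneg fun i _ => Finset.sum_nonneg fun j hj => ?_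
    exact mul_nonneg (by linarith [hA i j]) (by linarith [hB i j hj])
  rw [hkeyid] at hnn
  -- hence T * P ≤ T * ((n-2) Sa + s)
  have hTP : T * P ≤ T * (((n : ℝ) - 2) * Sa + s) := by nlinarith
  rcases eq_or_lt_of_le (by linarith : (0 : ℝ) ≤ T) with hT0 | hT0
  · -- T = 0, so Sa = 0 and s = 0
    have hSa0 : Sa = 0 := by linarith
    have hs0 : s = 0 := by linarith
    have hPle : P ≤ ((n : ℝ) - 1) * Sa := by
      rw [← hL, hP]
      exact Finset.sum_le_sum fun i _ => Finset.sum_le_sum fun j _ => hA i j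
    nlinarith
  · exact le_of_mul_le_mul_left (by linarith [hTP]) hT0

/- ### Translating skew information into a norm -/

theorem stmt_9 {d N : ℕ} (hN : 3 ≤ N)
    (ρ : Matrix (Fin d) (Fin d) ℂ) (hρ : ρ.PosSemidef) (htr : ρ.trace = 1)
    (U : Fin N → Matrix (Fin d) (Fin d) ℂ)
    (hU : ∀ s, U s ∈ Matrix.unitaryGroup (Fin d) ℂ) :
    ∑ s, Real.sqrt (skewInfo hρ (U s)) ≥
      (1 / ((N : ℝ) - 2)) *
        ((∑ s : Fin N, ∑ t ∈ Finset.Ioi s, Real.sqrt (skewInfo hρ (U s + U t)))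
          - Real.sqrt (skewInfo hρ (∑ s, U s))) := by
  classical
  -- embed matrices into Euclidean space via the commutator
  set R := hρ.sqrt with hR
  let φ : Matrix (Fin d) (Fin d) ℂ → EuclideanSpace ℂ (Fin d × Fin d) :=
    fun A => WithLp.toLp 2 (fun p => (R * A - A * R) p.1 p.2)
  have hφadd : ∀ A B, φ (A + B) = φ A + φ B := by
    intro A B
    ext p
    show (R * (A + B) - (A + B) * R) p.1 p.2 = (R * A - A * R) p.1 p.2 + (R * B - B * R) p.1 p.2
    have : R * (A + B) - (A + B) * R = (R * A - A * R) + (R * B - B * R) := by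
      noncomm_ring
    rw [this]; rfl
  have hφsum : φ (∑ s, U s) = ∑ s, φ (U s) :=
    map_sum (AddMonoidHom.mk' φ hφadd) U Finset.univ
  -- √(skewInfo hρ A) = √(1/2) * ‖φ A‖
  have hkey : ∀ A, Real.sqrt (skewInfo hρ A) = Real.sqrt (1 / 2) * ‖φ A‖ := by
    intro A
    have htr2 : (((R * A - A * R)ᴴ * (R * A - A * R)).trace).re
        = ∑ p : Fin d × Fin d, ‖(R * A - A * R) p.1 p.2‖ ^ 2 := by
      set M := R * A - A * R with hM
      calc (((Mᴴ * M).trace)).re = ∑ i : Fin d, ∑ j : Fin d, ‖M j i‖ ^ 2 := by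
            rw [Matrix.trace, Complex.re_sum]
            apply Finset.sum_congr rfl
            intro i _
            rw [Matrix.diag_apply, Matrix.mul_apply, Complex.re_sum]
            apply Finset.sum_congr rfl
            intro j _
            rw [Matrix.conjTranspose_apply]
            have h5 : star (M j i) * M j i = (Complex.normSq (M j i) : ℂ) := by
              rw [Complex.star_def, ← Complex.normSq_eq_conj_mul_self]
            rw [h5, Complex.ofReal_re, ← Complex.sq_norm]
        _ = ∑ p : Fin d × Fin d, ‖M p.1 p.2‖ ^ 2 := by
            rw [Fintype.sum_prod_type]
            exact Finset.sum_comm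
    have hnorm : ‖φ A‖ ^ 2 = ∑ p : Fin d × Fin d, ‖(R * A - A * R) p.1 p.2‖ ^ 2 := by
      rw [EuclideanSpace.norm_eq]
      rw [Real.sq_sqrt (Finset.sum_nonneg fun p _ => sq_nonneg _)]
    have : skewInfo hρ A = (1 / 2 : ℝ) * ‖φ A‖ ^ 2 := by
      rw [skewInfo, hnorm, htr2]
    rw [this, Real.sqrt_mul (by norm_num), Real.sqrt_sq (norm_nonneg _)]
  -- apply the Hlawka-type inequality
  have hHlawka := aux_hlawka (fun s => φ (U s))
  set c := Real.sqrt (1 / 2) with hc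
  have hcnn : 0 ≤ c := Real.sqrt_nonneg _
  have hsum1 : ∑ s, Real.sqrt (skewInfo hρ (U s)) = c * ∑ s, ‖φ (U s)‖ := by
    rw [Finset.mul_sum]
    exact Finset.sum_congr rfl fun s _ => hkey (U s)
  have hsum2 : ∑ s : Fin N, ∑ t ∈ Finset.Ioi s, Real.sqrt (skewInfo hρ (U s + U t))
      = c * ∑ s : Fin N, ∑ t ∈ Finset.Ioi s, ‖φ (U s) + φ (U t)‖ := by
    rw [Finset.mul_sum]
    refine Finset.sum_congr rfl fun s _ => ?_
    rw [Finset.mul_sum]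
    refine Finset.sum_congr rfl fun t _ => ?_
    rw [hkey (U s + U t), hφadd]
  have hsum3 : Real.sqrt (skewInfo hρ (∑ s, U s)) = c * ‖∑ s, φ (U s)‖ := by
    rw [hkey, hφsum]
  rw [hsum1, hsum2, hsum3, ge_iff_le]
  have hN2 : (0 : ℝ) < (N : ℝ) - 2 := by
    have : (3 : ℝ) ≤ (N : ℝ) := by exact_mod_cast hN
    linarith
  rw [div_mul_eq_mul_div, one_mul, div_le_iff₀ hN2]
  have h1 : ∑ s : Fin N, ∑ t ∈ Finset.Ioi s, ‖φ (U s) + φ (U t)‖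
      ≤ ((N : ℝ) - 2) * ∑ s, ‖φ (U s)‖ + ‖∑ s, φ (U s)‖ := hHlawka
  nlinarith [mul_le_mul_of_nonneg_left h1 hcnn, norm_nonneg (∑ s, φ (U s))]
end
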